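/- Let k ≥ 3 and n, m ∈ ℕ. If an integer t with T_n ≤ t < T_{n+1} appears as a component of some position in P_m, then m = n; that is, an integer in the interval [T_n, T_{n+1}) appears as a component in P_m for no m ≠ n. -/
import Mathlib


/-- `T n` is the `n`-th triangular number `n(n+1)/2`. -/
def T (n : ℕ) : ℕ := n * (n + 1) / 2

/-- `Pset k n` is the set `Pₙ` of positions `(T n, m₁, …, m_{k-1})` (nondecreasing
`k`-tuples) whose first component is `T n` and whose remaining components sum to
`(k-1)·T n + n` (each of them is automatically `≥ T n` by monotonicity). -/
def Pset (k : ℕ) [NeZero k] (n : ℕ) : Set (Fin k → ℕ) :=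
  {u | Monotone u ∧ u 0 = T n ∧
    ∑ i ∈ Finset.univ.erase 0, u i = (k - 1) * T n + n}

/-- A raw move of the `k`-heap game (before re-sorting): either (i) remove a positive
number of tokens from at least one and at most `k-1` heaps, or (ii) remove the same
positive number `t` of tokens from all `k` heaps (`t` at most the smallest heap). -/
def MoveRaw (k : ℕ) (u w : Fin k → ℕ) : Prop :=
  ((∀ i, w i ≤ u i) ∧ u ≠ w ∧
    (Finset.univ.filter fun i => w i < u i).card ≤ k - 1)
  ∨ (∃ t > 0, ∀ i, u i = w i + t)

/-- `v` is a follower of `u`: `v` is obtained from `u` by one move, with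
the components re-sorted into nondecreasing order. -/
def Follower (k : ℕ) (u v : Fin k → ℕ) : Prop :=
  ∃ w : Fin k → ℕ, MoveRaw k u w ∧ Monotone v ∧ ∃ σ : Equiv.Perm (Fin k), v = w ∘ σ

lemma two_T (n : ℕ) : 2 * T n = n * (n + 1) := by
  obtain ⟨r, hr⟩ := Nat.even_mul_succ_self n
  unfold T
  omega

lemma T_succ (n : ℕ) : T (n + 1) = T n + (n + 1) := by
  have h1 := two_T n
  have h2 := two_T (n + 1)
  nlinarith [h1, h2]

lemma T_mono : Monotone T := by
  intro a b h
  exact Nat.div_le_div_right (Nat.mul_le_mul h (by omega))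

/-- Lemma 2, second part: if an integer `t` with `T n ≤ t < T (n+1)`
appears as a component of some position of `Pₘ`, then `m = n`. -/
theorem component_determines_level (k : ℕ) [NeZero k] (hk : 3 ≤ k) (n m : ℕ)
    (u : Fin k → ℕ) (hu : u ∈ Pset k m) (i : Fin k)
    (h1 : T n ≤ u i) (h2 : u i < T (n + 1)) :
    m = n := by
  obtain ⟨hmono, h0, hsum⟩ := hu
  have hTm : T m ≤ u i := h0 ▸ hmono (show (0:Fin k) ≤ i by simp [Fin.le_def])
  -- upper bound: u i ≤ T m + m
  have hub : u i ≤ T m + m := by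
    by_cases hi : i = 0
    · subst hi; omega
    · have hi' : i ∈ Finset.univ.erase (0 : Fin k) :=
        Finset.mem_erase.mpr ⟨hi, Finset.mem_univ i⟩
      have hsplit := (Finset.add_sum_erase _ u hi').symm
      have hcard : ((Finset.univ.erase (0 : Fin k)).erase i).card = k - 2 := by
        rw [Finset.card_erase_of_mem hi',
          Finset.card_erase_of_mem (Finset.mem_univ 0), Finset.card_univ,
          Fintype.card_fin]
        omega
      have hge : ((Finset.univ.erase (0 : Fin k)).erase i).card * T m ≤
          ∑ j ∈ (Finset.univ.erase (0 : Fin k)).erase i, u j := by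
        have : ∀ j ∈ (Finset.univ.erase (0 : Fin k)).erase i, T m ≤ u j :=
          fun j _ => h0 ▸ hmono (show (0:Fin k) ≤ j by simp [Fin.le_def])
        calc ((Finset.univ.erase (0 : Fin k)).erase i).card * T m
            = ∑ _j ∈ (Finset.univ.erase (0 : Fin k)).erase i, T m := by
              rw [Finset.sum_const, smul_eq_mul]
          _ ≤ _ := Finset.sum_le_sum this
      rw [hcard] at hge
      have hk1 : (k - 1) * T m = (k - 2) * T m + T m := by
        have : k - 1 = (k - 2) + 1 := by omega
        rw [this, Nat.succ_mul]
      rw [hk1] at hsum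
      rw [hsplit] at hsum
      omega
  have hlt : u i < T (m + 1) := by rw [T_succ]; omega
  by_contra hne
  rcases lt_or_gt_of_ne hne with h | h
  · have : T (m + 1) ≤ T n := T_mono h
    omega
  · have : T (n + 1) ≤ T m := T_mono h
    omega
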